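/- For every ν > 0 and every z > 0, ∫₀^z t^{−1} J_ν(t)² dt < (1/(4πν²)) · (ez/(2ν))^{2ν}. -/

import Mathlib

open Real MeasureTheory

noncomputable section

/-- The Bessel function of the first kind, defined by its power series
`J_ν(x) = Σ_{m=0}^∞ ((−1)^m / (m! Γ(m+ν+1))) (x/2)^{2m+ν}`. -/
def besselJ (ν x : ℝ) : ℝ :=
  ∑' m : ℕ, ((-1 : ℝ) ^ m / (m.factorial * Real.Gamma ((m : ℝ) + ν + 1))) *
    (x / 2) ^ (2 * (m : ℝ) + ν)

section AuxiliaryLemmas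
open Real Filter Topology


lemma log_ineq_aux (u : ℝ) (hu : 0 < u) : 2*u/(2+u) < Real.log (1+u) := by
  have key : StrictMonoOn (fun u : ℝ => Real.log (1+u) - 2*u/(2+u)) (Set.Ici 0) := by
    have hd : ∀ x ∈ Set.Ici (0:ℝ), HasDerivAt (fun u : ℝ => Real.log (1+u) - 2*u/(2+u))
        (1/(1+x) - 4/(2+x)^2) x := by
      intro x hx
      have hx0 : (0:ℝ) ≤ x := hx
      have h1 : HasDerivAt (fun u : ℝ => Real.log (1+u)) (1/(1+x)) x := by
        have := ((hasDerivAt_id x).const_add 1).log (by positivity)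
        simpa using this
      have h2 : HasDerivAt (fun u : ℝ => 2*u/(2+u)) (4/(2+x)^2) x := by
        have ha : HasDerivAt (fun u : ℝ => 2*u) 2 x := by
          simpa using (hasDerivAt_id x).const_mul 2
        have hb : HasDerivAt (fun u : ℝ => 2+u) 1 x := by
          simpa using (hasDerivAt_id x).const_add 2
        have := ha.div hb (by positivity)
        convert this using 1 <;> try rfl
        field_simp
        ring
      exact h1.sub h2
    apply strictMonoOn_of_deriv_pos (convex_Ici 0)
    · exact fun x hx => ((hd x hx).continuousAt).continuousWithinAt
    · intro x hx
      rw [interior_Ici] at hx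
      have hx0 : (0:ℝ) < x := hx
      rw [(hd x (le_of_lt hx0)).deriv]
      have h1 : (0:ℝ) < 1 + x := by linarith
      have h2 : (0:ℝ) < 2 + x := by linarith
      rw [div_sub_div _ _ (ne_of_gt h1) (by positivity), lt_div_iff₀ (by positivity)]
      ring_nf
      nlinarith
  have := key (Set.self_mem_Ici) (Set.mem_Ici.mpr hu.le) hu
  simp only [add_zero, mul_zero, zero_div, Real.log_one, sub_zero] at this
  linarith [this]

lemma key_log (x : ℝ) (hx : 0 < x) : 1 < (x + 1/2) * Real.log (1 + 1/x) := by
  have h := log_ineq_aux (1/x) (by positivity)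
  have h2 : 2*(1/x)/(2+1/x) = 1/(x+1/2) := by
    rw [div_eq_div_iff (by positivity) (by positivity)]
    field_simp
  rw [h2] at h
  have hx2 : (0:ℝ) < x + 1/2 := by linarith
  calc (1:ℝ) = (x+1/2) * (1/(x+1/2)) := by field_simp
    _ < (x+1/2) * Real.log (1+1/x) := by exact mul_lt_mul_of_pos_left h hx2


namespace StirlingAux

/-- The Stirling approximant. -/
def S (x : ℝ) : ℝ := Real.sqrt (2*π*x) * (x / Real.exp 1) ^ (x : ℝ)

lemma S_pos {x : ℝ} (hx : 0 < x) : 0 < S x := by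
  have h1 : (0:ℝ) < 2*π*x := by positivity
  have h2 : (0:ℝ) < x / Real.exp 1 := by positivity
  exact mul_pos (Real.sqrt_pos.mpr h1) (Real.rpow_pos_of_pos h2 x)

lemma log_S {x : ℝ} (hx : 0 < x) :
    Real.log (S x) = (Real.log (2*π) + Real.log x)/2 + x * (Real.log x - 1) := by
  have h1 : (0:ℝ) < 2*π*x := by positivity
  have h2 : (0:ℝ) < x / Real.exp 1 := by positivity
  rw [S, Real.log_mul (by positivity) (ne_of_gt (Real.rpow_pos_of_pos h2 x)),
    Real.log_sqrt h1.le, Real.log_rpow h2, Real.log_div (ne_of_gt hx) (Real.exp_ne_zero 1),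
    Real.log_exp, Real.log_mul (by positivity) (ne_of_gt hx)]

lemma S_step {x : ℝ} (hx : 0 < x) : (x+1) * S x < S (x+1) := by
  have hx1 : (0:ℝ) < x + 1 := by linarith
  have hL : (0:ℝ) < (x+1) * S x := mul_pos hx1 (S_pos hx)
  rw [← Real.log_lt_log_iff hL (S_pos hx1),
    Real.log_mul (ne_of_gt hx1) (ne_of_gt (S_pos hx)), log_S hx, log_S hx1]
  have hkey := key_log x hx
  have hlog : Real.log (1 + 1/x) = Real.log (x+1) - Real.log x := by
    rw [show (1:ℝ) + 1/x = (x+1)/x by field_simp, Real.log_div (ne_of_gt hx1) (ne_of_gt hx)]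
  rw [hlog] at hkey
  nlinarith [hkey]


variable {y : ℝ}

lemma Gamma_prod (hy : 0 < y) (n : ℕ) :
    Real.Gamma (y + n + 1) = Real.Gamma y * ∏ j ∈ Finset.range (n+1), (y + j) := by
  induction n with
  | zero => simp [Real.Gamma_add_one (ne_of_gt hy), mul_comm]
  | succ n ih =>
    have h2 : (0:ℝ) < y + n + 1 := by positivity
    rw [Finset.prod_range_succ, ← mul_assoc, ← ih,
      show y + ((n:ℕ)+1:ℕ) + 1 = (y + (n:ℝ) + 1) + 1 by push_cast; ring,
      Real.Gamma_add_one h2.ne']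
    push_cast
    ring

lemma prod_eq (hy : 0 < y) {n : ℕ} (hn : 1 ≤ n) :
    ∏ j ∈ Finset.range (n+1), (y + j) = (n:ℝ)^y * n.factorial / Real.GammaSeq y n := by
  have hprod : (0:ℝ) < ∏ j ∈ Finset.range (n+1), (y + j) :=
    Finset.prod_pos fun j _ => by positivity
  rw [Real.GammaSeq]
  field_simp

lemma GammaSeq_pos (hy : 0 < y) {n : ℕ} (hn : 1 ≤ n) : 0 < Real.GammaSeq y n := by
  have hN : (0:ℝ) < (n:ℝ) := by exact_mod_cast hn
  have hprod : (0:ℝ) < ∏ j ∈ Finset.range (n+1), (y + j) :=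
    Finset.prod_pos fun j _ => by positivity
  rw [Real.GammaSeq]
  positivity

lemma exp_identity (hy : 0 < y) {n : ℕ} (hn : 1 ≤ n) :
    (n:ℝ)^y * ((n:ℝ)/Real.exp 1)^n =
      (Real.exp y * Real.exp (-((y+n) * Real.log (1 + y/n)))) * ((y+(n:ℝ))/Real.exp 1)^(y+(n:ℝ)) := by
  have hN : (0:ℝ) < (n:ℝ) := by exact_mod_cast hn
  have hM : (0:ℝ) < y + n := by positivity
  have e1 : (n:ℝ)^y = Real.exp (Real.log n * y) := Real.rpow_def_of_pos hN y
  have e2 : ((n:ℝ)/Real.exp 1)^n = Real.exp ((Real.log n - 1) * n) := by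
    rw [← Real.rpow_natCast ((n:ℝ)/Real.exp 1) n, Real.rpow_def_of_pos (by positivity),
      Real.log_div (ne_of_gt hN) (Real.exp_ne_zero 1), Real.log_exp]
  have e3 : ((y+(n:ℝ))/Real.exp 1)^(y+(n:ℝ)) = Real.exp ((Real.log (y+n) - 1) * (y+n)) := by
    rw [Real.rpow_def_of_pos (by positivity),
      Real.log_div (ne_of_gt hM) (Real.exp_ne_zero 1), Real.log_exp]
  have e4 : Real.log (1 + y/n) = Real.log (y+n) - Real.log n := by
    rw [show (1:ℝ) + y/n = (y+n)/n by field_simp; ring, Real.log_div (ne_of_gt hM) (ne_of_gt hN)]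
  rw [e1, e2, e3, e4, ← Real.exp_add, ← Real.exp_add, ← Real.exp_add]
  exact congrArg Real.exp (by ring)

lemma r_eq (hy : 0 < y) {n : ℕ} (hn : 1 ≤ n) :
    Real.Gamma (y + n + 1) / S (y + n) =
      (Real.Gamma y / Real.GammaSeq y n) * Stirling.stirlingSeq n *
        (Real.sqrt (2*n) / Real.sqrt (2*π*(y+n))) *
        (Real.exp y * Real.exp (-((y+n) * Real.log (1 + y/n)))) := by
  have hN : (0:ℝ) < (n:ℝ) := by exact_mod_cast hn
  have hM : (0:ℝ) < y + n := by positivity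
  have hsq2n : (0:ℝ) < Real.sqrt (2*n) := Real.sqrt_pos.mpr (by positivity)
  have hsq2pi : (0:ℝ) < Real.sqrt (2*π*(y+n)) := Real.sqrt_pos.mpr (by positivity)
  have hrp : (0:ℝ) < ((y+(n:ℝ))/Real.exp 1)^(y+(n:ℝ)) := Real.rpow_pos_of_pos (by positivity) _
  have hpow : (0:ℝ) < ((n:ℝ)/Real.exp 1)^n := pow_pos (by positivity) n
  have hny : (0:ℝ) < (n:ℝ)^y := Real.rpow_pos_of_pos hN y
  have hGS := GammaSeq_pos hy hn
  have hfact : (n.factorial : ℝ) =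
      Stirling.stirlingSeq n * (Real.sqrt (2*n) * ((n:ℝ)/Real.exp 1)^n) := by
    rw [Stirling.stirlingSeq]
    field_simp
  have hexp' : ((n:ℝ)^y * ((n:ℝ)/Real.exp 1)^n) / ((y+(n:ℝ))/Real.exp 1)^(y+(n:ℝ)) =
      Real.exp y * Real.exp (-((y+n) * Real.log (1 + y/n))) := by
    rw [exp_identity hy hn]
    exact mul_div_cancel_right₀ _ (ne_of_gt hrp)
  calc Real.Gamma (y + n + 1) / S (y + n)
      = (Real.Gamma y / Real.GammaSeq y n) * Stirling.stirlingSeq n *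
        (Real.sqrt (2*n) / Real.sqrt (2*π*(y+n))) *
        (((n:ℝ)^y * ((n:ℝ)/Real.exp 1)^n) / ((y+(n:ℝ))/Real.exp 1)^(y+(n:ℝ))) := by
        rw [Gamma_prod hy n, prod_eq hy hn, S, hfact]
        field_simp
    _ = _ := by rw [hexp']


variable {y : ℝ}

lemma tendsto_r (hy : 0 < y)
    (hr_eq : ∀ n : ℕ, 1 ≤ n → Real.Gamma (y + n + 1) / S (y + n) =
      (Real.Gamma y / Real.GammaSeq y n) * Stirling.stirlingSeq n *
        (Real.sqrt (2*n) / Real.sqrt (2*π*(y+n))) *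
        (Real.exp y * Real.exp (-((y+n) * Real.log (1 + y/n))))) :
    Tendsto (fun n : ℕ => Real.Gamma (y+n+1)/S (y+n)) atTop (𝓝 1) := by
  have hπ : (0:ℝ) < π := Real.pi_pos
  have hsqπ : Real.sqrt π ≠ 0 := ne_of_gt (Real.sqrt_pos.mpr hπ)
  have hΓ : Real.Gamma y ≠ 0 := ne_of_gt (Real.Gamma_pos_of_pos hy)
  -- A
  have hA : Tendsto (fun n : ℕ => Real.Gamma y / Real.GammaSeq y n) atTop (𝓝 1) := by
    have h2 := (tendsto_const_nhds (x := Real.Gamma y) (f := (atTop : Filter ℕ))).div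
      (Real.GammaSeq_tendsto_Gamma y) hΓ
    simpa [div_self hΓ, Pi.div_def] using h2
  -- B
  have hB := Stirling.tendsto_stirlingSeq_sqrt_pi
  -- n/(y+n) → 1
  have hMtop : Tendsto (fun n : ℕ => y + (n:ℝ)) atTop atTop :=
    tendsto_atTop_add_const_left atTop y tendsto_natCast_atTop_atTop
  have hfrac : Tendsto (fun n : ℕ => (n:ℝ)/(y+n)) atTop (𝓝 1) := by
    have h0 : Tendsto (fun n : ℕ => y * (y + (n:ℝ))⁻¹) atTop (𝓝 0) := by
      simpa using (hMtop.inv_tendsto_atTop).const_mul y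
    have h1 : Tendsto (fun n : ℕ => 1 - y * (y + (n:ℝ))⁻¹) atTop (𝓝 1) := by
      simpa using (tendsto_const_nhds (x := (1:ℝ))).sub h0
    apply h1.congr
    intro n
    have hM : (0:ℝ) < y + n := by positivity
    field_simp; ring
  -- C
  have hC : Tendsto (fun n : ℕ => Real.sqrt (2*n) / Real.sqrt (2*π*(y+n))) atTop
      (𝓝 (Real.sqrt π)⁻¹) := by
    have h1 : Tendsto (fun n : ℕ => (2*(n:ℝ))/(2*π*(y+n))) atTop (𝓝 π⁻¹) := by
      have h2 : Tendsto (fun n : ℕ => π⁻¹ * ((n:ℝ)/(y+n))) atTop (𝓝 (π⁻¹ * 1)) :=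
        hfrac.const_mul π⁻¹
      rw [mul_one] at h2
      apply h2.congr'
      filter_upwards [eventually_ge_atTop 1] with n hn
      have hM : (0:ℝ) < y + n := by positivity
      field_simp
    have h3 := (Real.continuous_sqrt.tendsto π⁻¹).comp h1
    have h4 : ∀ n : ℕ, Real.sqrt ((2*(n:ℝ))/(2*π*(y+n))) =
        Real.sqrt (2*n) / Real.sqrt (2*π*(y+n)) := fun n =>
      Real.sqrt_div (by positivity) _
    rw [show Real.sqrt π⁻¹ = (Real.sqrt π)⁻¹ from Real.sqrt_inv π] at h3
    exact Tendsto.congr (fun n => h4 n) h3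
  -- D
  have hD : Tendsto (fun n : ℕ => Real.exp y * Real.exp (-((y+n) * Real.log (1 + y/n))))
      atTop (𝓝 1) := by
    have hlog1 : Tendsto (fun n : ℕ => (n:ℝ) * Real.log (1 + y/n)) atTop (𝓝 y) := by
      have hp := Real.tendsto_one_add_div_pow_exp y
      have hcont : Tendsto (fun n : ℕ => Real.log ((1 + y/(n:ℝ))^n)) atTop (𝓝 y) := by
        have h8 := (Real.continuousAt_log (ne_of_gt (Real.exp_pos y))).tendsto.comp hp
        simp only [Real.log_exp, Function.comp_def] at h8
        exact h8
      apply hcont.congr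
      intro n
      rw [Real.log_pow]
    have hlog2 : Tendsto (fun n : ℕ => y * Real.log (1 + y/n)) atTop (𝓝 0) := by
      have h5 : Tendsto (fun n : ℕ => 1 + y/(n:ℝ)) atTop (𝓝 1) := by
        have := tendsto_natCast_atTop_atTop (R := ℝ).inv_tendsto_atTop.const_mul y
        have h6 : Tendsto (fun n : ℕ => y * (n:ℝ)⁻¹) atTop (𝓝 0) := by simpa using this
        simpa [div_eq_mul_inv] using (tendsto_const_nhds (x := (1:ℝ))).add h6
      have := (Real.continuousAt_log one_ne_zero).tendsto.comp h5
      simp only [Real.log_one] at this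
      simpa using this.const_mul y
    have hsum : Tendsto (fun n : ℕ => (y+(n:ℝ)) * Real.log (1 + y/n)) atTop (𝓝 y) := by
      have := hlog2.add hlog1
      rw [zero_add] at this
      apply this.congr
      intro n
      ring
    have := (Real.continuous_exp.tendsto (-y)).comp hsum.neg
    have h7 : Tendsto (fun n : ℕ => Real.exp y * Real.exp (-((y+n) * Real.log (1 + y/n))))
        atTop (𝓝 (Real.exp y * Real.exp (-y))) := this.const_mul _
    simpa [← Real.exp_add] using h7
  have hprod := ((hA.mul hB).mul hC).mul hD
  have hone : ((1:ℝ) * Real.sqrt π) * (Real.sqrt π)⁻¹ * 1 = 1 := by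
    field_simp
  rw [hone] at hprod
  apply hprod.congr' ?_
  filter_upwards [eventually_ge_atTop 1] with n hn
  exact (hr_eq n hn).symm


lemma r_step {x : ℝ} (hx : 0 < x) :
    Real.Gamma ((x+1)+1) / S (x+1) < Real.Gamma (x+1) / S x := by
  have hx1 : (0:ℝ) < x + 1 := by linarith
  have hΓ : (0:ℝ) < Real.Gamma (x+1) := Real.Gamma_pos_of_pos hx1
  rw [Real.Gamma_add_one (ne_of_gt hx1)]
  have h1 : (0:ℝ) < (x+1) * S x := mul_pos hx1 (S_pos hx)
  have h2 := S_step hx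
  calc (x+1) * Real.Gamma (x+1) / S (x+1) < (x+1) * Real.Gamma (x+1) / ((x+1) * S x) :=
        div_lt_div_of_pos_left (by positivity) h1 h2
    _ = Real.Gamma (x+1) / S x := by
        rw [mul_div_mul_left _ _ (ne_of_gt hx1)]

lemma one_le_r {x : ℝ} (hx : 0 < x) : 1 ≤ Real.Gamma (x+1) / S x := by
  have hmono : ∀ n : ℕ, Real.Gamma (x+n+1) / S (x+n) ≤ Real.Gamma (x+1) / S x := by
    intro n
    induction n with
    | zero => simp
    | succ n ih =>
      refine le_trans (le_of_lt ?_) ih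
      have h := r_step (x := x + n) (by positivity)
      have hc : x + ((n:ℕ)+1:ℕ) = (x + (n:ℝ)) + 1 := by push_cast; ring
      rw [hc]
      exact h
  exact le_of_tendsto (tendsto_r hx (fun n hn => r_eq hx hn)) (Eventually.of_forall hmono)

/-- **Stirling's lower bound for the real Gamma function.** -/
theorem S_lt_Gamma {x : ℝ} (hx : 0 < x) : S x < Real.Gamma (x+1) := by
  have h1 : 1 ≤ Real.Gamma ((x+1)+1) / S (x+1) := one_le_r (by linarith)
  have h2 := r_step hx
  have h3 : 1 < Real.Gamma (x+1) / S x := lt_of_le_of_lt h1 h2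
  exact (one_lt_div (S_pos hx)).mp h3

end StirlingAux

namespace BesselAux

/-- coefficients of the Bessel series -/
def c (ν : ℝ) (m : ℕ) : ℝ := (-1)^m / (m.factorial * Real.Gamma ((m:ℝ) + ν + 1))

def g0 (ν y : ℝ) : ℝ := ∑' m : ℕ, c ν m * y^m
def g1 (ν y : ℝ) : ℝ := ∑' m : ℕ, c ν (m+1) * (m+1) * y^m
def g2 (ν y : ℝ) : ℝ := ∑' m : ℕ, c ν (m+2) * (m+2) * (m+1) * y^m

variable {ν : ℝ}

lemma Gamma_arg_pos (hν : 0 < ν) (m : ℕ) : (0:ℝ) < (m:ℝ) + ν + 1 := by positivity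

lemma Gamma_pos (hν : 0 < ν) (m : ℕ) : 0 < Real.Gamma ((m:ℝ) + ν + 1) :=
  Real.Gamma_pos_of_pos (Gamma_arg_pos hν m)

lemma Gamma_le (hν : 0 < ν) (m : ℕ) : Real.Gamma (ν + 1) ≤ Real.Gamma ((m:ℝ) + ν + 1) := by
  induction m with
  | zero => simp
  | succ m ih =>
    have h1 : ((m+1:ℕ):ℝ) + ν + 1 = ((m:ℝ) + ν + 1) + 1 := by push_cast; ring
    rw [h1, Real.Gamma_add_one (ne_of_gt (Gamma_arg_pos hν m))]
    have h2 : (1:ℝ) ≤ (m:ℝ) + ν + 1 := by have : (0:ℝ) ≤ (m:ℝ) := Nat.cast_nonneg m; linarith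
    nlinarith [Gamma_pos hν m, ih]

lemma c_abs_le (hν : 0 < ν) (m : ℕ) :
    |c ν m| ≤ 1 / (Real.Gamma (ν+1) * m.factorial) := by
  have hΓ := Real.Gamma_pos_of_pos (show (0:ℝ) < ν + 1 by linarith)
  have hΓm := Gamma_pos hν m
  have hf : (0:ℝ) < m.factorial := by exact_mod_cast m.factorial_pos
  rw [c, abs_div, abs_pow, abs_neg, abs_one, one_pow, abs_of_pos (by positivity)]
  rw [div_le_div_iff₀ (by positivity) (by positivity)]
  have := Gamma_le hν m
  nlinarith

lemma summable_helper {f : ℕ → ℝ} (C A : ℝ)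
    (h : ∀ m, |f m| ≤ C * A^m / m.factorial) : Summable f := by
  have hs : Summable (fun m : ℕ => C * A^m / m.factorial) := by
    have := (Real.summable_pow_div_factorial A).mul_left C
    apply this.congr
    intro m
    rw [mul_div_assoc]
  exact Summable.of_norm_bounded hs (fun m => h m)

lemma aux_pow_le (R : ℝ) (hR : 0 ≤ R) (m : ℕ) : (m:ℝ) * R^(m-1) ≤ (2*R+2)^m := by
  have h1 : (m:ℝ) ≤ 2^m := by exact_mod_cast Nat.le_of_lt_succ (Nat.lt_succ_of_le (Nat.le_of_lt ((Nat.lt_two_pow_self (n := m)))))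
  have h2 : R^(m-1) ≤ (R+1)^m := by
    calc R^(m-1) ≤ (R+1)^(m-1) := pow_le_pow_left₀ hR (by linarith) _
      _ ≤ (R+1)^m := pow_le_pow_right₀ (by linarith) (Nat.sub_le m 1)
  calc (m:ℝ) * R^(m-1) ≤ 2^m * (R+1)^m := by
        apply mul_le_mul h1 h2 (by positivity) (by positivity)
    _ = (2*(R+1))^m := by rw [mul_pow]
    _ = (2*R+2)^m := by ring_nf

lemma sum0 (hν : 0 < ν) (y : ℝ) : Summable (fun m : ℕ => c ν m * y^m) := by
  apply summable_helper (1/Real.Gamma (ν+1)) (|y|)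
  intro m
  rw [abs_mul, abs_pow]
  calc |c ν m| * |y|^m ≤ 1/(Real.Gamma (ν+1) * m.factorial) * |y|^m := by
        apply mul_le_mul_of_nonneg_right (c_abs_le hν m) (by positivity)
    _ = 1/Real.Gamma (ν+1) * |y|^m / m.factorial := by field_simp

lemma sum1 (hν : 0 < ν) (y : ℝ) : Summable (fun m : ℕ => c ν (m+1) * (m+1) * y^m) := by
  apply summable_helper (1/Real.Gamma (ν+1)) (|y|)
  intro m
  have h1 := c_abs_le hν (m+1)
  have hm1 : ((m+1:ℕ).factorial : ℝ) = (m+1) * m.factorial := by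
    rw [Nat.factorial_succ]; push_cast; ring
  have hΓ := Real.Gamma_pos_of_pos (show (0:ℝ) < ν + 1 by linarith)
  have hf : (0:ℝ) < m.factorial := by exact_mod_cast m.factorial_pos
  rw [abs_mul, abs_mul, abs_pow]
  have habs1 : |((m:ℝ)+1)| = (m:ℝ)+1 := abs_of_pos (by positivity)
  rw [habs1]
  calc |c ν (m+1)| * ((m:ℝ)+1) * |y|^m
      ≤ (1/(Real.Gamma (ν+1) * (m+1).factorial)) * ((m:ℝ)+1) * |y|^m := by
        apply mul_le_mul_of_nonneg_right (mul_le_mul_of_nonneg_right h1 (by positivity)) (by positivity)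
    _ = 1/Real.Gamma (ν+1) * |y|^m / m.factorial := by
        rw [hm1]; field_simp

lemma sum2 (hν : 0 < ν) (y : ℝ) :
    Summable (fun m : ℕ => c ν (m+2) * (m+2) * (m+1) * y^m) := by
  apply summable_helper (1/Real.Gamma (ν+1)) (|y|)
  intro m
  have h1 := c_abs_le hν (m+2)
  have hm1 : ((m+2:ℕ).factorial : ℝ) = (m+2) * ((m+1) * m.factorial) := by
    rw [show m+2 = (m+1)+1 from rfl, Nat.factorial_succ, Nat.factorial_succ]; push_cast; ring
  have hΓ := Real.Gamma_pos_of_pos (show (0:ℝ) < ν + 1 by linarith)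
  have hf : (0:ℝ) < m.factorial := by exact_mod_cast m.factorial_pos
  rw [abs_mul, abs_mul, abs_mul, abs_pow]
  have habs1 : |((m:ℝ)+1)| = (m:ℝ)+1 := abs_of_pos (by positivity)
  have habs2 : |((m:ℝ)+2)| = (m:ℝ)+2 := abs_of_pos (by positivity)
  rw [habs1, habs2]
  calc |c ν (m+2)| * ((m:ℝ)+2) * ((m:ℝ)+1) * |y|^m
      ≤ (1/(Real.Gamma (ν+1) * (m+2).factorial)) * ((m:ℝ)+2) * ((m:ℝ)+1) * |y|^m := by
        apply mul_le_mul_of_nonneg_right ?_ (by positivity)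
        apply mul_le_mul_of_nonneg_right ?_ (by positivity)
        exact mul_le_mul_of_nonneg_right h1 (by positivity)
    _ = 1/Real.Gamma (ν+1) * |y|^m / m.factorial := by
        rw [hm1]; field_simp

lemma summable_CA (C A : ℝ) : Summable (fun m : ℕ => C * A^m / m.factorial) := by
  have := (Real.summable_pow_div_factorial A).mul_left C
  apply this.congr
  intro m
  rw [mul_div_assoc]

lemma hasDerivAt_g0 (hν : 0 < ν) (y : ℝ) : HasDerivAt (g0 ν) (g1 ν y) y := by
  set R := |y| + 1 with hR
  have hRpos : (0:ℝ) < R := by positivity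
  have hyR : y ∈ Set.Ioo (-R) R := by
    constructor <;> [nlinarith [abs_nonneg y, neg_abs_le y]; nlinarith [le_abs_self y]]
  have key : HasDerivAt (fun z => ∑' m : ℕ, c ν m * z^m)
      (∑' m : ℕ, c ν m * ((m:ℝ) * y^(m-1))) y := by
    apply hasDerivAt_tsum_of_isPreconnected
      (u := fun m : ℕ => (1/Real.Gamma (ν+1)) * (2*R+2)^m / m.factorial)
      (summable_CA _ _) isOpen_Ioo (convex_Ioo _ _).isPreconnected
      (fun m z _ => (hasDerivAt_pow m z).const_mul (c ν m)) ?_ hyR (sum0 hν y) hyR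
    intro m z hz
    have hzR : |z| ≤ R := by
      rw [abs_le]; exact ⟨hz.1.le, hz.2.le⟩
    have h1 : ‖c ν m * ((m:ℝ) * z^(m-1))‖ ≤ |c ν m| * ((m:ℝ) * R^(m-1)) := by
      rw [Real.norm_eq_abs, abs_mul, abs_mul, abs_pow, Nat.abs_cast]
      apply mul_le_mul_of_nonneg_left ?_ (abs_nonneg _)
      exact mul_le_mul_of_nonneg_left (pow_le_pow_left₀ (abs_nonneg z) hzR _) (Nat.cast_nonneg m)
    calc ‖c ν m * ((m:ℝ) * z^(m-1))‖ ≤ |c ν m| * ((m:ℝ) * R^(m-1)) := h1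
      _ ≤ (1/(Real.Gamma (ν+1) * m.factorial)) * (2*R+2)^m := by
          apply mul_le_mul (c_abs_le hν m) (aux_pow_le R hRpos.le m) (by positivity) (by positivity)
      _ = (1/Real.Gamma (ν+1)) * (2*R+2)^m / m.factorial := by
          have hf : (0:ℝ) < m.factorial := by exact_mod_cast m.factorial_pos
          field_simp
  have hre : (∑' m : ℕ, c ν m * ((m:ℝ) * y^(m-1))) = g1 ν y := by
    have hsum : Summable (fun m : ℕ => c ν m * ((m:ℝ) * y^(m-1))) := by
      apply summable_helper (1/Real.Gamma (ν+1)) (2*R+2)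
      intro m
      rw [abs_mul, abs_mul, abs_pow, Nat.abs_cast]
      have h2 : |y| ≤ R := by rw [hR]; linarith
      calc |c ν m| * ((m:ℝ) * |y|^(m-1))
          ≤ (1/(Real.Gamma (ν+1) * m.factorial)) * ((m:ℝ) * R^(m-1)) := by
            apply mul_le_mul (c_abs_le hν m) ?_ (by positivity) (by positivity)
            exact mul_le_mul_of_nonneg_left (pow_le_pow_left₀ (abs_nonneg y) h2 _) (Nat.cast_nonneg m)
        _ ≤ (1/(Real.Gamma (ν+1) * m.factorial)) * (2*R+2)^m := by
            have hΓ := Real.Gamma_pos_of_pos (show (0:ℝ) < ν + 1 by linarith)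
            have hf : (0:ℝ) < m.factorial := by exact_mod_cast m.factorial_pos
            exact mul_le_mul_of_nonneg_left (aux_pow_le R hRpos.le m) (by positivity)
        _ = (1/Real.Gamma (ν+1)) * (2*R+2)^m / m.factorial := by
            have hf : (0:ℝ) < m.factorial := by exact_mod_cast m.factorial_pos
            field_simp
    rw [Summable.tsum_eq_zero_add hsum]
    simp only [Nat.cast_zero, zero_mul, mul_zero, zero_add, g1]
    congr 1
    funext m
    simp only [Nat.cast_add, Nat.cast_one, Nat.add_sub_cancel]
    ring
  rw [← hre]
  exact key

lemma c1_bound (hν : 0 < ν) (m : ℕ) :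
    |c ν (m+1)| * ((m:ℝ)+1) ≤ 1/(Real.Gamma (ν+1) * m.factorial) := by
  have h1 := c_abs_le hν (m+1)
  have hm1 : ((m+1:ℕ).factorial : ℝ) = ((m:ℝ)+1) * m.factorial := by
    rw [Nat.factorial_succ]; push_cast; ring
  have hΓ := Real.Gamma_pos_of_pos (show (0:ℝ) < ν + 1 by linarith)
  have hf : (0:ℝ) < m.factorial := by exact_mod_cast m.factorial_pos
  calc |c ν (m+1)| * ((m:ℝ)+1) ≤ (1/(Real.Gamma (ν+1) * (m+1).factorial)) * ((m:ℝ)+1) := by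
        exact mul_le_mul_of_nonneg_right h1 (by positivity)
    _ = 1/(Real.Gamma (ν+1) * m.factorial) := by rw [hm1]; field_simp

set_option maxHeartbeats 1000000 in
lemma hasDerivAt_g1 (hν : 0 < ν) (y : ℝ) : HasDerivAt (g1 ν) (g2 ν y) y := by
  set R := |y| + 1 with hR
  have hRpos : (0:ℝ) < R := by positivity
  have hyR : y ∈ Set.Ioo (-R) R := by
    constructor <;> [nlinarith [abs_nonneg y, neg_abs_le y]; nlinarith [le_abs_self y]]
  have bnd : ∀ (m : ℕ) (z : ℝ), |z| ≤ R →
      ‖c ν (m+1) * ((m:ℝ)+1) * ((m:ℝ) * z^(m-1))‖ ≤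
        (1/Real.Gamma (ν+1)) * (2*R+2)^m / m.factorial := by
    intro m z hz
    have hf : (0:ℝ) < m.factorial := by exact_mod_cast m.factorial_pos
    rw [Real.norm_eq_abs, abs_mul, abs_mul, abs_mul, abs_pow, Nat.abs_cast,
      abs_of_pos (show (0:ℝ) < (m:ℝ)+1 by positivity)]
    calc |c ν (m+1)| * ((m:ℝ)+1) * ((m:ℝ) * |z|^(m-1))
        ≤ (1/(Real.Gamma (ν+1) * m.factorial)) * (2*R+2)^m := by
          apply mul_le_mul (c1_bound hν m) ?_ (by positivity) (by positivity)
          calc (m:ℝ) * |z|^(m-1) ≤ (m:ℝ) * R^(m-1) := by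
                exact mul_le_mul_of_nonneg_left (pow_le_pow_left₀ (abs_nonneg z) hz _) (Nat.cast_nonneg m)
            _ ≤ (2*R+2)^m := aux_pow_le R hRpos.le m
      _ = (1/Real.Gamma (ν+1)) * (2*R+2)^m / m.factorial := by field_simp
  have key : HasDerivAt (fun z => ∑' m : ℕ, c ν (m+1) * ((m:ℝ)+1) * z^m)
      (∑' m : ℕ, c ν (m+1) * ((m:ℝ)+1) * ((m:ℝ) * y^(m-1))) y := by
    apply hasDerivAt_tsum_of_isPreconnected
      (u := fun m : ℕ => (1/Real.Gamma (ν+1)) * (2*R+2)^m / m.factorial)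
      (summable_CA _ _) isOpen_Ioo (convex_Ioo _ _).isPreconnected
      (fun m z _ => (hasDerivAt_pow m z).const_mul (c ν (m+1) * ((m:ℝ)+1))) ?_ hyR ?_ hyR
    · intro m z hz
      exact bnd m z (by rw [abs_le]; exact ⟨hz.1.le, hz.2.le⟩)
    · apply (sum1 hν y).congr
      intro m
      push_cast
      ring
  have hre : (∑' m : ℕ, c ν (m+1) * ((m:ℝ)+1) * ((m:ℝ) * y^(m-1))) = g2 ν y := by
    have hsum : Summable (fun m : ℕ => c ν (m+1) * ((m:ℝ)+1) * ((m:ℝ) * y^(m-1))) := by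
      apply summable_helper (1/Real.Gamma (ν+1)) (2*R+2)
      intro m
      exact bnd m y (by rw [hR]; linarith)
    rw [Summable.tsum_eq_zero_add hsum]
    simp only [Nat.cast_zero, zero_mul, mul_zero, zero_add, g2]
    congr 1
    funext m
    simp only [Nat.cast_add, Nat.cast_one, Nat.add_sub_cancel]
    push_cast
    ring
  rw [← hre]
  exact key

lemma c_rec (hν : 0 < ν) (m : ℕ) :
    c ν (m+1) * (((m:ℝ)+1) * ((m:ℝ)+ν+1)) = - c ν m := by
  have hΓm := Gamma_pos hν m
  have harg := Gamma_arg_pos hν m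
  have hf : (0:ℝ) < m.factorial := by exact_mod_cast m.factorial_pos
  have hG : Real.Gamma (((m+1:ℕ):ℝ) + ν + 1) = ((m:ℝ)+ν+1) * Real.Gamma ((m:ℝ)+ν+1) := by
    rw [show ((m+1:ℕ):ℝ) + ν + 1 = ((m:ℝ)+ν+1) + 1 by push_cast; ring,
      Real.Gamma_add_one (ne_of_gt harg)]
  have hfac : ((m+1:ℕ).factorial : ℝ) = ((m:ℝ)+1) * m.factorial := by
    rw [Nat.factorial_succ]; push_cast; ring
  rw [c, c, hG, hfac, pow_succ]
  field_simp

lemma sum_f (hν : 0 < ν) (y : ℝ) :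
    Summable (fun m : ℕ => c ν (m+1) * ((m:ℝ)+1) * (m:ℝ) * y^m) := by
  apply summable_helper (1/Real.Gamma (ν+1)) (2*|y|+2)
  intro m
  have hf : (0:ℝ) < m.factorial := by exact_mod_cast m.factorial_pos
  have hΓ := Real.Gamma_pos_of_pos (show (0:ℝ) < ν + 1 by linarith)
  rw [abs_mul, abs_mul, abs_mul, abs_pow, Nat.abs_cast,
    abs_of_pos (show (0:ℝ) < (m:ℝ)+1 by positivity)]
  have h1 : (m:ℝ) * |y|^m ≤ (2*|y|+2)^m := by
    have hm2 : (m:ℝ) ≤ 2^m := by exact_mod_cast Nat.le_of_lt ((Nat.lt_two_pow_self (n := m)))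
    have hy2 : |y|^m ≤ (|y|+1)^m := pow_le_pow_left₀ (abs_nonneg y) (by linarith) m
    calc (m:ℝ) * |y|^m ≤ 2^m * (|y|+1)^m :=
          mul_le_mul hm2 hy2 (by positivity) (by positivity)
      _ = (2*(|y|+1))^m := by rw [mul_pow]
      _ = (2*|y|+2)^m := by ring_nf
  calc |c ν (m+1)| * ((m:ℝ)+1) * (m:ℝ) * |y|^m
      = |c ν (m+1)| * ((m:ℝ)+1) * ((m:ℝ) * |y|^m) := by ring
    _ ≤ (1/(Real.Gamma (ν+1) * m.factorial)) * (2*|y|+2)^m :=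
        mul_le_mul (c1_bound hν m) h1 (by positivity) (by positivity)
    _ = 1/Real.Gamma (ν+1) * (2*|y|+2)^m / m.factorial := by field_simp

lemma ode (hν : 0 < ν) (y : ℝ) :
    y * g2 ν y + (ν+1) * g1 ν y + g0 ν y = 0 := by
  have hfs := sum_f hν y
  have h1 : y * g2 ν y = ∑' m : ℕ, c ν (m+1) * ((m:ℝ)+1) * (m:ℝ) * y^m := by
    rw [g2, ← tsum_mul_left]
    have hshift : ∀ m : ℕ, y * (c ν (m+2) * ((m:ℝ)+2) * ((m:ℝ)+1) * y^m) =
        c ν ((m+1)+1) * (((m+1:ℕ):ℝ)+1) * ((m+1:ℕ):ℝ) * y^(m+1) := by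
      intro m
      push_cast
      ring
    rw [tsum_congr hshift, Summable.tsum_eq_zero_add hfs]
    simp
  have h2 : (ν+1) * g1 ν y = ∑' m : ℕ, (ν+1) * (c ν (m+1) * ((m:ℝ)+1) * y^m) := by
    rw [g1, ← tsum_mul_left]
  have hs1 : Summable (fun m : ℕ => (ν+1) * (c ν (m+1) * ((m:ℝ)+1) * y^m)) := by
    apply Summable.mul_left
    apply (sum1 hν y).congr
    intro m
    ring
  rw [h1, h2, g0, ← Summable.tsum_add hfs hs1, ← Summable.tsum_add (hfs.add hs1) (sum0 hν y)]
  have hterm : ∀ m : ℕ, (c ν (m+1) * ((m:ℝ)+1) * (m:ℝ) * y^m +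
      (ν+1) * (c ν (m+1) * ((m:ℝ)+1) * y^m)) + c ν m * y^m = 0 := by
    intro m
    linear_combination (y^m) * c_rec hν m
  rw [tsum_congr hterm]
  exact tsum_zero

def E (ν y : ℝ) : ℝ := g0 ν y ^ 2 + y * g1 ν y ^ 2

lemma hasDerivAt_E (hν : 0 < ν) (y : ℝ) :
    HasDerivAt (E ν) (-(2*ν+1) * g1 ν y ^ 2) y := by
  have h0 := hasDerivAt_g0 hν y
  have h1 := hasDerivAt_g1 hν y
  have hsq : HasDerivAt (fun z => g0 ν z ^ 2) (2 * g0 ν y * g1 ν y) y := by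
    have := h0.pow 2
    norm_num at this
    convert this using 1 <;> try rfl <;> try ring
  have hb : HasDerivAt (fun z => g1 ν z ^ 2) (2 * g1 ν y * g2 ν y) y := by
    have := h1.pow 2
    norm_num at this
    convert this using 1 <;> try rfl <;> try ring
  have hmul : HasDerivAt (fun z => z * g1 ν z ^ 2)
      (g1 ν y ^2 + y * (2 * g1 ν y * g2 ν y)) y := by
    have := (hasDerivAt_id y).mul hb
    (convert this using 1 <;> try rfl) <;> try (simp; try ring)
  have hadd := hsq.add hmul
  have heq : -(2*ν+1) * g1 ν y ^ 2 =
      2 * g0 ν y * g1 ν y + (g1 ν y ^2 + y * (2 * g1 ν y * g2 ν y)) := by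
    linear_combination (-2 * g1 ν y) * ode hν y
  rw [heq]
  exact hadd

lemma E_le (hν : 0 < ν) {y : ℝ} (hy : 0 ≤ y) : E ν y ≤ E ν 0 := by
  have hanti : AntitoneOn (E ν) (Set.Ici 0) := by
    apply antitoneOn_of_deriv_nonpos (convex_Ici 0)
    · exact (Differentiable.continuous (fun z => (hasDerivAt_E hν z).differentiableAt)).continuousOn
    · intro x _
      exact (hasDerivAt_E hν x).differentiableAt.differentiableWithinAt
    · intro x _
      rw [(hasDerivAt_E hν x).deriv]
      nlinarith [sq_nonneg (g1 ν x)]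
  exact hanti Set.self_mem_Ici (Set.mem_Ici.mpr hy) hy

lemma g0_zero (hν : 0 < ν) : g0 ν 0 = 1 / Real.Gamma (ν+1) := by
  rw [g0, tsum_eq_single 0]
  · simp [c]
  · intro m hm
    simp [zero_pow hm]

lemma g0_sq_le (hν : 0 < ν) {y : ℝ} (hy : 0 ≤ y) :
    g0 ν y ^ 2 ≤ (1/Real.Gamma (ν+1))^2 := by
  have h := E_le hν hy
  have hE0 : E ν 0 = (1/Real.Gamma (ν+1))^2 := by
    rw [E, g0_zero hν]
    ring
  rw [E] at h
  nlinarith [mul_nonneg hy (sq_nonneg (g1 ν y))]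
end BesselAux
end AuxiliaryLemmas

section AuxiliaryLemmas2
open Real Filter Topology
namespace BesselAux
variable {ν : ℝ}

lemma besselJ_eq (hν : 0 < ν) {x : ℝ} (hx : 0 < x) :
    besselJ ν x = g0 ν (x^2/4) * (x/2)^(ν:ℝ) := by
  rw [besselJ, g0, ← tsum_mul_right]
  congr 1
  funext m
  have h2 : (0:ℝ) < x/2 := by linarith
  rw [c, mul_assoc]
  congr 1
  rw [Real.rpow_add h2]
  congr 1
  rw [show (2*(m:ℝ)) = ((2*m : ℕ):ℝ) by push_cast; ring, Real.rpow_natCast, pow_mul]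
  congr 1
  ring

lemma besselJ_sq_le (hν : 0 < ν) {x : ℝ} (hx : 0 < x) :
    (besselJ ν x)^2 ≤ x^(2*ν) / ((2:ℝ)^(2*ν) * Real.Gamma (ν+1)^2) := by
  have hΓ := Real.Gamma_pos_of_pos (show (0:ℝ) < ν + 1 by linarith)
  have h2 : (0:ℝ) < x/2 := by linarith
  have hg := g0_sq_le hν (show (0:ℝ) ≤ x^2/4 by positivity)
  have hr2 : ((x/2)^(ν:ℝ))^2 = (x/2)^(2*ν) := by
    rw [show ((x/2)^(ν:ℝ))^2 = ((x/2)^(ν:ℝ))^((2:ℕ):ℝ) by rw [Real.rpow_natCast],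
      ← Real.rpow_mul h2.le]
    ring_nf
  have hdiv : (x/2)^(2*ν) = x^(2*ν) / (2:ℝ)^(2*ν) := Real.div_rpow hx.le (by norm_num) _
  rw [besselJ_eq hν hx, mul_pow, hr2, hdiv]
  have hb : (0:ℝ) < x^(2*ν) := Real.rpow_pos_of_pos hx _
  have hc : (0:ℝ) < (2:ℝ)^(2*ν) := Real.rpow_pos_of_pos (by norm_num) _
  calc g0 ν (x^2/4)^2 * (x^(2*ν) / (2:ℝ)^(2*ν))
      ≤ (1/Real.Gamma (ν+1))^2 * (x^(2*ν) / (2:ℝ)^(2*ν)) :=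
        mul_le_mul_of_nonneg_right hg (by positivity)
    _ = x^(2*ν) / ((2:ℝ)^(2*ν) * Real.Gamma (ν+1)^2) := by
        rw [div_pow, one_pow, div_mul_div_comm, one_mul]; ring

lemma besselJ_continuousOn (hν : 0 < ν) :
    ContinuousOn (besselJ ν) (Set.Ioi 0) := by
  have hg0cont : Continuous (g0 ν) :=
    Differentiable.continuous (fun z => (hasDerivAt_g0 hν z).differentiableAt)
  have h1 : Continuous (fun t : ℝ => g0 ν (t^2/4)) := hg0cont.comp (by continuity)
  have h2 : ContinuousOn (fun t : ℝ => (t/2)^(ν:ℝ)) (Set.Ioi 0) := by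
    intro t ht
    have htp : (0:ℝ) < t := ht
    apply ContinuousAt.continuousWithinAt
    have hb : ContinuousAt (fun t : ℝ => t/2) t := by fun_prop
    exact hb.rpow_const (Or.inr hν.le)
  apply (ContinuousOn.mul h1.continuousOn h2).congr
  intro t ht
  exact besselJ_eq hν (Set.mem_Ioi.mp ht)

end BesselAux
end AuxiliaryLemmas2

/-- **Bound on the low-frequency Bessel integral:**
for `ν > 0` and `z > 0`, `∫₀^z t⁻¹ J_ν(t)² dt < (1/(4πν²)) (ez/(2ν))^{2ν}`. -/
theorem besselJ_integral_near_zero_lt (ν z : ℝ) (hν : 0 < ν) (hz : 0 < z) :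
    ∫ t in Set.Ioc (0 : ℝ) z, t⁻¹ * (besselJ ν t) ^ 2 <
      (1 / (4 * Real.pi * ν ^ 2)) * (Real.exp 1 * z / (2 * ν)) ^ (2 * ν) := by
  have hSt : Real.sqrt (2*π*ν) * (ν/Real.exp 1)^(ν:ℝ) < Real.Gamma (ν+1) := by
    have h := StirlingAux.S_lt_Gamma hν
    rwa [StirlingAux.S] at h
  have hΓ : 0 < Real.Gamma (ν+1) := Real.Gamma_pos_of_pos (by linarith)
  have hT : (0:ℝ) < (2:ℝ)^(2*ν) := Real.rpow_pos_of_pos (by norm_num) _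
  have hπ : (0:ℝ) < π := Real.pi_pos
  set C : ℝ := ((2:ℝ)^(2*ν) * Real.Gamma (ν+1)^2)⁻¹ with hC
  have hCpos : 0 < C := by positivity
  have hpt : ∀ t ∈ Set.Ioc (0:ℝ) z, t⁻¹ * (besselJ ν t)^2 ≤ C * t^(2*ν-1) := by
    intro t ht
    obtain ⟨ht0, htz⟩ := ht
    have h1 := BesselAux.besselJ_sq_le (ν := ν) hν ht0
    have h2 : t⁻¹ * (besselJ ν t)^2 ≤ t⁻¹ * (t^(2*ν) / ((2:ℝ)^(2*ν) * Real.Gamma (ν+1)^2)) :=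
      mul_le_mul_of_nonneg_left h1 (by positivity)
    refine h2.trans_eq ?_
    have h3 : t⁻¹ * t^(2*ν) = t^(2*ν-1) := by
      rw [Real.rpow_sub ht0, Real.rpow_one]
      exact inv_mul_eq_div _ _
    rw [hC, div_eq_mul_inv, ← h3]
    ring
  have hb_int : MeasureTheory.IntegrableOn (fun t => C * t^(2*ν-1)) (Set.Ioc 0 z) := by
    have h := intervalIntegral.intervalIntegrable_rpow' (show (-1:ℝ) < 2*ν-1 by linarith)
      (a := 0) (b := z)
    rw [intervalIntegrable_iff_integrableOn_Ioc_of_le hz.le] at h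
    exact h.const_mul C
  have hf_cont : ContinuousOn (fun t : ℝ => t⁻¹ * (besselJ ν t)^2) (Set.Ioc 0 z) := by
    apply ContinuousOn.mul
    · exact ContinuousOn.inv₀ continuousOn_id (fun t ht => ne_of_gt ht.1)
    · exact ((BesselAux.besselJ_continuousOn hν).mono (fun t ht => ht.1)).pow 2
  have hf_int : MeasureTheory.IntegrableOn (fun t => t⁻¹ * (besselJ ν t)^2) (Set.Ioc 0 z) := by
    apply MeasureTheory.Integrable.mono' hb_int (hf_cont.aestronglyMeasurable measurableSet_Ioc)
    rw [MeasureTheory.ae_restrict_iff' measurableSet_Ioc]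
    apply MeasureTheory.ae_of_all
    intro t ht
    have h0 : 0 ≤ t⁻¹ * (besselJ ν t)^2 := mul_nonneg (inv_nonneg.mpr ht.1.le) (sq_nonneg _)
    rw [Real.norm_eq_abs, abs_of_nonneg h0]
    exact hpt t ht
  have hmono := MeasureTheory.setIntegral_mono_on hf_int hb_int measurableSet_Ioc hpt
  have hval : ∫ t in Set.Ioc (0:ℝ) z, C * t^(2*ν-1) = C * (z^(2*ν) / (2*ν)) := by
    rw [MeasureTheory.integral_const_mul]
    congr 1
    rw [← intervalIntegral.integral_of_le hz.le, integral_rpow (Or.inl (by linarith))]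
    rw [show 2*ν-1+1 = 2*ν by ring, Real.zero_rpow (by positivity), sub_zero]
  have hSq : 2*π*ν * (ν^(2*ν) / Real.exp (2*ν)) < Real.Gamma (ν+1)^2 := by
    have hS0 : (0:ℝ) ≤ Real.sqrt (2*π*ν) * (ν/Real.exp 1)^(ν:ℝ) := by positivity
    have hsq := pow_lt_pow_left₀ hSt hS0 (show 2 ≠ 0 by norm_num)
    rw [mul_pow, Real.sq_sqrt (by positivity)] at hsq
    have hr2 : ((ν/Real.exp 1)^(ν:ℝ))^2 = ν^(2*ν) / Real.exp (2*ν) := by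
      rw [show ((ν/Real.exp 1)^(ν:ℝ))^2 = ((ν/Real.exp 1)^(ν:ℝ))^((2:ℕ):ℝ) by
          rw [Real.rpow_natCast],
        ← Real.rpow_mul (by positivity), show ν*(2:ℕ) = 2*ν by push_cast; ring,
        Real.div_rpow hν.le (Real.exp_pos 1).le, Real.exp_one_rpow]
    rw [hr2] at hsq
    exact hsq
  refine lt_of_le_of_lt (hmono.trans_eq hval) ?_
  have hRHS : (Real.exp 1 * z/(2*ν))^(2*ν) =
      Real.exp (2*ν) * z^(2*ν) / ((2:ℝ)^(2*ν) * ν^(2*ν)) := by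
    rw [Real.div_rpow (by positivity) (by positivity), Real.mul_rpow (Real.exp_pos 1).le hz.le,
      Real.mul_rpow (by norm_num) hν.le, Real.exp_one_rpow]
  rw [hRHS, hC]
  have hX : (0:ℝ) < z^(2*ν) := Real.rpow_pos_of_pos hz _
  have hN : (0:ℝ) < ν^(2*ν) := Real.rpow_pos_of_pos hν _
  have hEo : (0:ℝ) < Real.exp (2*ν) := Real.exp_pos _
  have hL : ((2:ℝ)^(2*ν) * Real.Gamma (ν+1)^2)⁻¹ * (z^(2*ν) / (2*ν)) =
      z^(2*ν) / (2*ν*((2:ℝ)^(2*ν)*Real.Gamma (ν+1)^2)) := by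
    rw [inv_mul_eq_div, div_div, mul_comm (2*ν)]
  have hR : (1 / (4*π*ν^2)) * (Real.exp (2*ν) * z^(2*ν) / ((2:ℝ)^(2*ν) * ν^(2*ν))) =
      Real.exp (2*ν) * z^(2*ν) / ((2:ℝ)^(2*ν) * ν^(2*ν) * (4*π*ν^2)) := by
    rw [one_div, inv_mul_eq_div, div_div]
  rw [hL, hR, div_lt_div_iff₀ (by positivity) (by positivity)]
  have hSq' : 2*π*ν * ν^(2*ν) < Real.Gamma (ν+1)^2 * Real.exp (2*ν) := by
    rw [mul_div_assoc'] at hSq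
    exact (div_lt_iff₀ hEo).mp hSq
  have key := mul_lt_mul_of_pos_left hSq'
    (show (0:ℝ) < z^(2*ν) * (2*ν) * (2:ℝ)^(2*ν) by positivity)
  nlinarith [key]

end
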